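/- Let A ∈ T^{n×n} be tropically non-singular with unique maximizing permutation τ_A. Then the fundamental cell F(A) = { x ∈ ℝ^n : ∀i, ∀j ≠ τ_A(i), A_{ij} + x_j < A_{iτ_A(i)} + x_{τ_A(i)} } is a non-empty open subset of ℝ^n, and the map φ_A : x ↦ A⊙x restricted to F(A) is given by (φ_A(x))_i = A_{iτ_A(i)} + x_{τ_A(i)}; in particular φ_A is an isometry of F(A) into ℝ^n for the Euclidean distance. -/

import Mathlib

/-- The max-plus (tropical) semiring `T = ℝ ∪ {-∞}`. -/
abbrev T : Type := WithBot ℝ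

/-- Tropical matrix product. -/
noncomputable def tmul {n m k : ℕ} (A : Fin n → Fin m → T) (B : Fin m → Fin k → T) :
    Fin n → Fin k → T :=
  fun i j => Finset.univ.sup fun l => A i l + B l j

/-- Tropical matrix-vector product. -/
noncomputable def tmulVec {n m : ℕ} (A : Fin n → Fin m → T) (u : Fin m → T) : Fin n → T :=
  fun i => Finset.univ.sup fun j => A i j + u j

/-- Tropical identity matrix. -/
noncomputable def tId (n : ℕ) : Fin n → Fin n → T :=
  fun i j => if i = j then (0 : T) else ⊥

/-- Tropical matrix powers. -/
noncomputable def tpow {n : ℕ} (A : Fin n → Fin n → T) : ℕ → (Fin n → Fin n → T)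
  | 0 => tId n
  | (m + 1) => tmul (tpow A m) A

/-- Tropical product of a list of matrices (empty product = identity). -/
noncomputable def tProd {n : ℕ} : List (Fin n → Fin n → T) → (Fin n → Fin n → T)
  | [] => tId n
  | (M :: L) => tmul M (tProd L)

/-- Weight of a permutation. -/
noncomputable def wt {n : ℕ} (A : Fin n → Fin n → T) (σ : Equiv.Perm (Fin n)) : T :=
  ∑ i, A i (σ i)

/-- Tropical permanent. -/
noncomputable def per {n : ℕ} (A : Fin n → Fin n → T) : T :=
  Finset.univ.sup fun σ : Equiv.Perm (Fin n) => wt A σ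

/-- Tropical non-singularity: finite permanent attained by a unique permutation. -/
def NonSingular {n : ℕ} (A : Fin n → Fin n → T) : Prop :=
  per A ≠ ⊥ ∧ ∃! σ : Equiv.Perm (Fin n), wt A σ = per A

/-- Weight of the circuit `c 0 → c 1 → ⋯ → c ℓ → c 0` (length `ℓ+1`). -/
noncomputable def cwt {n ℓ : ℕ} (A : Fin n → Fin n → T) (c : Fin (ℓ + 1) → Fin n) : T :=
  ∑ k : Fin (ℓ + 1), A (c k) (c (k + 1))

/-- `ρ(A) = r`: some circuit has mean weight `r`, and every circuit has mean weight `≤ r`. -/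
def RhoEq {n : ℕ} (A : Fin n → Fin n → T) (r : ℝ) : Prop :=
  (∃ ℓ, ∃ c : Fin (ℓ + 1) → Fin n, cwt A c = ((((ℓ : ℝ) + 1) * r : ℝ) : T)) ∧
  ∀ ℓ, ∀ c : Fin (ℓ + 1) → Fin n, cwt A c ≤ ((((ℓ : ℝ) + 1) * r : ℝ) : T)

/-- `(i,j)` is an arc of the critical graph (lies on a circuit of mean weight `r = ρ(A)`). -/
def CritArc {n : ℕ} (A : Fin n → Fin n → T) (r : ℝ) (i j : Fin n) : Prop :=
  ∃ ℓ, ∃ c : Fin (ℓ + 1) → Fin n, cwt A c = ((((ℓ : ℝ) + 1) * r : ℝ) : T) ∧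
    ∃ k : Fin (ℓ + 1), c k = i ∧ c (k + 1) = j

/-- `i` is a node of the critical graph. -/
def CritNode {n : ℕ} (A : Fin n → Fin n → T) (r : ℝ) (i : Fin n) : Prop :=
  ∃ ℓ, ∃ c : Fin (ℓ + 1) → Fin n, cwt A c = ((((ℓ : ℝ) + 1) * r : ℝ) : T) ∧
    ∃ k : Fin (ℓ + 1), c k = i

/-- Reachability in the critical graph. -/
def CritReach {n : ℕ} (A : Fin n → Fin n → T) (r : ℝ) : Fin n → Fin n → Prop :=
  Relation.ReflTransGen (fun i j => CritArc A r i j)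

/-- Same strongly connected component of the critical graph. -/
def SameScc {n : ℕ} (A : Fin n → Fin n → T) (r : ℝ) (i j : Fin n) : Prop :=
  CritReach A r i j ∧ CritReach A r j i

/-- `R` is a set of representatives, one per scc of the critical graph. -/
def SccReps {n : ℕ} (A : Fin n → Fin n → T) (r : ℝ) (R : Finset (Fin n)) : Prop :=
  (∀ i ∈ R, CritNode A r i) ∧
  (∀ i ∈ R, ∀ j ∈ R, i ≠ j → ¬ SameScc A r i j) ∧
  (∀ j, CritNode A r j → ∃ i ∈ R, SameScc A r i j)

/-- Cyclicity of the scc of the critical graph containing `i`: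
the gcd (greatest common divisor) of the lengths of the critical circuits through `i`. -/
noncomputable def cycAt {n : ℕ} (A : Fin n → Fin n → T) (r : ℝ) (i : Fin n) : ℕ :=
  sSup {d : ℕ | ∀ ℓ : ℕ,
    (∃ c : Fin (ℓ + 1) → Fin n, cwt A c = ((((ℓ : ℝ) + 1) * r : ℝ) : T) ∧ c 0 = i) →
    d ∣ (ℓ + 1)}

/-- `A` has an `r × r` tropically non-singular submatrix. -/
def HasNSsub {n m : ℕ} (A : Fin n → Fin m → T) (r : ℕ) : Prop :=
  ∃ f : Fin r → Fin n, ∃ g : Fin r → Fin m,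
    Function.Injective f ∧ Function.Injective g ∧
    NonSingular (fun i j => A (f i) (g j))

/-- Tropical rank: maximal size of a tropically non-singular square submatrix. -/
noncomputable def trrk {n m : ℕ} (A : Fin n → Fin m → T) : ℕ :=
  sSup {r : ℕ | HasNSsub A r}

/-- Tropical convex hull (span) of a finite family of vectors of `T^n`. -/
def tSpan {n m : ℕ} (v : Fin m → (Fin n → T)) : Set (Fin n → T) :=
  { w | ∃ α : Fin m → T, w = fun i => Finset.univ.sup fun j => α j + v j i }

/-- Weak dimension of a tropically convex set: minimal size of a generating family. -/
noncomputable def weakDim {n : ℕ} (X : Set (Fin n → T)) : ℕ :=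
  sInf {k : ℕ | ∃ v : Fin k → (Fin n → T), tSpan v = X}

/-- Column rank: weak dimension of the tropical convex hull of the columns. -/
noncomputable def colrk {n m : ℕ} (A : Fin n → Fin m → T) : ℕ :=
  weakDim (tSpan fun j => fun i => A i j)

/-- Row rank: weak dimension of the tropical convex hull of the rows. -/
noncomputable def rowrk {n m : ℕ} (A : Fin n → Fin m → T) : ℕ :=
  weakDim (tSpan fun i => fun j => A i j)

namespace Stmt10Aux

open List

variable {n : ℕ}

/-- Weight of a path given as a list of vertices. -/
def pw (G : Fin n → Fin n → ℝ) : List (Fin n) → ℝ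
  | [] => 0
  | [_] => 0
  | a :: b :: t => G a b + pw G (b :: t)

@[simp] lemma pw_nil (G : Fin n → Fin n → ℝ) : pw G [] = 0 := rfl
@[simp] lemma pw_single (G : Fin n → Fin n → ℝ) (a : Fin n) : pw G [a] = 0 := rfl
@[simp] lemma pw_cons_cons (G : Fin n → Fin n → ℝ) (a b : Fin n) (t : List (Fin n)) :
    pw G (a :: b :: t) = G a b + pw G (b :: t) := rfl

lemma pw_append_cons (G : Fin n → Fin n → ℝ) :
    ∀ (X : List (Fin n)) (a : Fin n) (Y : List (Fin n)),
      pw G (X ++ a :: Y) = pw G (X ++ [a]) + pw G (a :: Y)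
  | [], a, Y => by simp
  | [x], a, Y => by simp
  | x :: x' :: X', a, Y => by
      have h := pw_append_cons G (x' :: X') a Y
      simp only [cons_append, pw_cons_cons] at h ⊢
      rw [h]; ring

lemma pw_eq_sum_map (G : Fin n → Fin n → ℝ) (h : Fin n → ℝ) :
    ∀ l : List (Fin n), Chain' (fun u w => G u w = h w) l → pw G l = (l.tail.map h).sum
  | [], _ => by simp
  | [a], _ => by simp
  | a :: b :: t, hc => by
      obtain ⟨h1, h2⟩ := List.isChain_cons_cons.mp hc
      rw [pw_cons_cons, h1, pw_eq_sum_map G h (b :: t) h2]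
      simp

lemma pw_sub (G : Fin n → Fin n → ℝ) (δ : ℝ) :
    ∀ l : List (Fin n), pw (fun u v => G u v - δ) l = pw G l - ((l.length - 1 : ℕ) : ℝ) * δ
  | [] => by simp
  | [a] => by simp
  | a :: b :: t => by
      rw [pw_cons_cons, pw_cons_cons, pw_sub G δ (b :: t)]
      simp only [length_cons, Nat.add_sub_cancel]
      push_cast
      ring

lemma chain'_exists_prev {α : Type*} {r : α → α → Prop} :
    ∀ l : List α, Chain' r l → ∀ w ∈ l.tail, ∃ u, r u w
  | [], _, w, hw => by simp at hw
  | [a], _, w, hw => by simp at hw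
  | a :: b :: t, hc, w, hw => by
      obtain ⟨h1, h2⟩ := List.isChain_cons_cons.mp hc
      rcases List.mem_cons.mp hw with rfl | hw'
      · exact ⟨a, h1⟩
      · exact chain'_exists_prev (b :: t) h2 w hw'

lemma chain'_and {α : Type*} {r s : α → α → Prop} {l : List α}
    (hr : Chain' r l) (hs : Chain' s l) : Chain' (fun a b => r a b ∧ s a b) l := by
  unfold Chain' at hr hs ⊢
  rw [List.isChain_iff_getElem] at hr hs ⊢
  exact fun i hi => ⟨hr i hi, hs i hi⟩

lemma feas (G : Fin n → Fin n → ℝ) (E : Fin n → Fin n → Prop)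
    (hcyc : ∀ (v : Fin n) (l : List (Fin n)), (v :: l).Nodup → l ≠ [] →
      Chain' E (v :: l ++ [v]) → 0 ≤ pw G (v :: l ++ [v])) :
    ∃ x : Fin n → ℝ, ∀ u v, u ≠ v → E u v → x u - x v ≤ G u v := by
  classical
  set S : Fin n → Set ℝ := fun v =>
    (fun l : List (Fin n) => pw G l) '' {l | l.Nodup ∧ Chain' E l ∧ l.head? = some v} with hS
  have hSfin : ∀ v, (S v).Finite := by
    intro v
    apply Set.Finite.image
    have h1 : {l : List (Fin n) | l.Nodup}.Finite := by
      haveI : Fintype {l : List (Fin n) // l.Nodup} := fintypeNodupList (α := Fin n)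
      apply Set.Finite.ofFinset
        (Finset.univ.map (Function.Embedding.subtype (fun l : List (Fin n) => l.Nodup)))
      simp
    exact h1.subset fun l hl => hl.1
  have hSne : ∀ v, (S v).Nonempty := fun v => ⟨0, [v], ⟨by simp, List.isChain_singleton v, by simp⟩, by simp [pw]⟩
  set x : Fin n → ℝ := fun v => sInf (S v) with hx
  have hmem : ∀ v, x v ∈ S v := fun v => Set.Nonempty.csInf_mem (hSne v) (hSfin v)
  have hle : ∀ v r, r ∈ S v → x v ≤ r := fun v r hr => csInf_le (hSfin v).bddBelow hr
  refine ⟨x, ?_⟩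
  intro u v huv hE
  obtain ⟨P, ⟨hnd, hch, hhd⟩, hpw⟩ := hmem v
  obtain ⟨t, rfl⟩ : ∃ t, P = v :: t := by
    cases P with
    | nil => simp at hhd
    | cons a t =>
        simp only [head?_cons, Option.some.injEq] at hhd
        exact ⟨t, by rw [hhd]⟩
  by_cases hu : u ∈ v :: t
  · obtain ⟨X, Y, hXY⟩ := List.append_of_mem hu
    obtain ⟨X₀, rfl⟩ : ∃ X₀, X = v :: X₀ := by
      cases X with
      | nil => exfalso; apply huv; simpa using (List.cons.injEq .. ▸ hXY : _) |>.1.symm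
      | cons x0 X₀ =>
          have h0 : v = x0 := by simpa using congrArg List.head? hXY
          exact ⟨X₀, by rw [h0]⟩
    have hsuf : (u :: Y) <:+ (v :: t) := ⟨v :: X₀, hXY.symm⟩
    have hxu : x u ≤ pw G (u :: Y) := by
      apply hle
      exact ⟨u :: Y, ⟨hnd.sublist hsuf.sublist, hch.suffix hsuf, by simp⟩, rfl⟩
    have hpre : ((v :: X₀) ++ [u]) <+: (v :: t) := ⟨Y, by rw [hXY]; simp⟩
    have hcycle : 0 ≤ pw G ((v :: (X₀ ++ [u])) ++ [v]) := by
      apply hcyc v (X₀ ++ [u])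
      · exact hnd.sublist (by simpa using hpre.sublist)
      · simp
      · rw [show (v :: (X₀ ++ [u])) ++ [v] = ((v :: X₀) ++ [u]) ++ [v] by simp]
        apply List.isChain_append.mpr
        refine ⟨by simpa using hch.prefix hpre, List.isChain_singleton v, ?_⟩
        intro p hp q hq
        simp only [head?_cons, Option.mem_def, Option.some.injEq] at hq
        have hp' : p = u := by
          have := List.getLast?_concat (a := u) (l := v :: X₀)
          simp only [cons_append] at this hp
          rw [this] at hp
          exact (by simpa using hp : u = p).symm
        rw [hp', ← hq]
        exact hE
    have hsplit : pw G (v :: t) = pw G ((v :: X₀) ++ [u]) + pw G (u :: Y) := by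
      rw [hXY]
      exact pw_append_cons G (v :: X₀) u Y
    have hkey := pw_append_cons G (v :: X₀) u [v]
    simp only [cons_append, append_assoc, singleton_append, nil_append, pw_cons_cons, pw_single,
      add_zero] at hkey hcycle hsplit
    rw [hkey] at hcycle
    rw [← hpw]
    simp only [cons_append] at hxu ⊢
    linarith [hxu, hsplit, hcycle]
  · have hxu : x u ≤ G u v + pw G (v :: t) := by
      apply hle
      refine ⟨u :: v :: t, ⟨?_, ?_, by simp⟩, by simp [pw]⟩
      · exact List.nodup_cons.mpr ⟨hu, hnd⟩
      · exact List.isChain_cons_cons.mpr ⟨hE, hch⟩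
    rw [← hpw]; linarith

lemma feasStrict (G : Fin n → Fin n → ℝ) (E : Fin n → Fin n → Prop)
    (hcyc : ∀ (v : Fin n) (l : List (Fin n)), (v :: l).Nodup → l ≠ [] →
      Chain' E (v :: l ++ [v]) → 0 < pw G (v :: l ++ [v])) :
    ∃ x : Fin n → ℝ, ∀ u v, u ≠ v → E u v → x u - x v < G u v := by
  classical
  set C : Set ℝ := {r | ∃ v : Fin n, ∃ l : List (Fin n), (v :: l).Nodup ∧ l ≠ [] ∧
    Chain' E (v :: l ++ [v]) ∧ r = pw G (v :: l ++ [v])} with hC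
  have hCfin : C.Finite := by
    have h1 : C ⊆ (fun p : Fin n × List (Fin n) => pw G (p.1 :: p.2 ++ [p.1])) ''
        {p : Fin n × List (Fin n) | (p.2 : List (Fin n)).Nodup} := by
      rintro r ⟨v, l, h1, h2, h3, rfl⟩
      exact ⟨(v, l), (List.nodup_cons.mp h1).2, rfl⟩
    refine Set.Finite.subset (Set.Finite.image _ ?_) h1
    have h2 : {l : List (Fin n) | l.Nodup}.Finite := by
      haveI : Fintype {l : List (Fin n) // l.Nodup} := fintypeNodupList (α := Fin n)
      apply Set.Finite.ofFinset
        (Finset.univ.map (Function.Embedding.subtype (fun l : List (Fin n) => l.Nodup)))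
      simp
    have h3 := (Set.finite_univ (α := Fin n)).prod h2
    exact h3.subset fun p hp => ⟨Set.mem_univ _, hp⟩
  obtain ⟨δ, hδpos, hδcyc⟩ : ∃ δ : ℝ, 0 < δ ∧
      ∀ (v : Fin n) (l : List (Fin n)), (v :: l).Nodup → l ≠ [] →
        Chain' E (v :: l ++ [v]) → 0 ≤ pw (fun u w => G u w - δ) (v :: l ++ [v]) := by
    by_cases hCne : C.Nonempty
    · set m := sInf C with hm
      have hmC : m ∈ C := Set.Nonempty.csInf_mem hCne hCfin
      have hmpos : 0 < m := by
        obtain ⟨v, l, h1, h2, h3, h4⟩ := hmC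
        rw [h4]; exact hcyc v l h1 h2 h3
      refine ⟨m / (n + 1), by positivity, ?_⟩
      intro v l h1 h2 h3
      rw [pw_sub]
      have hlen : ((v :: l ++ [v]).length - 1 : ℕ) = l.length + 1 := by simp
      have hmle : m ≤ pw G (v :: l ++ [v]) := csInf_le hCfin.bddBelow ⟨v, l, h1, h2, h3, rfl⟩
      have hcard : (l.length + 1 : ℝ) ≤ n := by
        have := h1.length_le_card
        simp only [length_cons, Fintype.card_fin] at this
        exact_mod_cast this
      rw [hlen]
      have hn1 : (0:ℝ) < (n:ℝ) + 1 := by positivity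
      rw [sub_nonneg]
      calc ((l.length + 1 : ℕ) : ℝ) * (m / (n + 1)) ≤ (n : ℝ) * (m / (n+1)) := by
            apply mul_le_mul_of_nonneg_right _ (by positivity)
            push_cast; linarith
        _ ≤ m := by
            have h' : (n:ℝ)/(n+1) ≤ 1 := by rw [div_le_one hn1]; linarith
            calc (n:ℝ)*(m/(n+1)) = m * ((n:ℝ)/(n+1)) := by ring
              _ ≤ m * 1 := by nlinarith [hmpos]
              _ = m := by ring
        _ ≤ pw G (v :: l ++ [v]) := hmle
    · refine ⟨1, one_pos, ?_⟩
      intro v l h1 h2 h3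
      exact absurd ⟨v, l, h1, h2, h3, rfl⟩ (fun h => hCne ⟨_, h⟩)
  obtain ⟨x, hx⟩ := feas (fun u w => G u w - δ) E hδcyc
  exact ⟨x, fun u v huv hE => lt_of_le_of_lt (hx u v huv hE) (by linarith)⟩

lemma chain'_formPerm (v : Fin n) (l : List (Fin n)) (hnd : (v :: l).Nodup) :
    Chain' (fun u w => (v :: l).formPerm u = w) ((v :: l) ++ [v]) := by
  set L := v :: l with hL
  unfold Chain'
  rw [List.isChain_iff_getElem]
  intro i hi
  have hlen : (L ++ [v]).length = L.length + 1 := by simp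
  have hi' : i < L.length := by
    simp only [hlen, Nat.add_sub_cancel] at hi
    omega
  have h1 : (L ++ [v])[i]'(by simp; omega) = L[i]'hi' := List.getElem_append_left hi'
  rw [h1]
  have hfp := List.formPerm_apply_getElem L hnd i hi'
  rcases Nat.lt_or_ge (i+1) L.length with hlt | hge
  · have h2 : (L ++ [v])[i+1]'(by simp; omega) = L[i+1]'hlt := List.getElem_append_left hlt
    rw [h2, hfp]
    congr 1
    exact Nat.mod_eq_of_lt hlt
  · have heq : i + 1 = L.length := by omega
    have h2 : (L ++ [v])[i+1]'(by simp; omega) = v := by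
      rw [List.getElem_append_right (by omega)]
      simp [heq]
    rw [h2, hfp]
    have : (i+1) % L.length = 0 := by rw [heq, Nat.mod_self]
    simp only [this]
    show L[0]'(by omega) = v
    simp [hL]

end Stmt10Aux
/-- The fundamental cell of a non-singular matrix is a non-empty open
subset of `ℝ^n`, on which `x ↦ A ⊙ x` is given by `i ↦ A_{iτ(i)} + x_{τ(i)}`; in
particular it is a Euclidean isometry of the fundamental cell into `ℝ^n`. -/
theorem stmt10 {n : ℕ} (A : Fin n → Fin n → T) (hA : NonSingular A)
    (τ : Equiv.Perm (Fin n)) (hτ : wt A τ = per A) :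
    ∃ a : Fin n → ℝ, (∀ i, A i (τ i) = ((a i : ℝ) : T)) ∧
    (Set.Nonempty {x : Fin n → ℝ | ∀ i : Fin n, ∀ j : Fin n, j ≠ τ i →
        A i j + ((x j : ℝ) : T) < A i (τ i) + ((x (τ i) : ℝ) : T)}) ∧
    (IsOpen {x : Fin n → ℝ | ∀ i : Fin n, ∀ j : Fin n, j ≠ τ i →
        A i j + ((x j : ℝ) : T) < A i (τ i) + ((x (τ i) : ℝ) : T)}) ∧
    (∀ x ∈ {x : Fin n → ℝ | ∀ i : Fin n, ∀ j : Fin n, j ≠ τ i →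
        A i j + ((x j : ℝ) : T) < A i (τ i) + ((x (τ i) : ℝ) : T)},
      ∀ i, tmulVec A (fun j => ((x j : ℝ) : T)) i = ((a i + x (τ i) : ℝ) : T)) ∧
    (∀ x ∈ {x : Fin n → ℝ | ∀ i : Fin n, ∀ j : Fin n, j ≠ τ i →
        A i j + ((x j : ℝ) : T) < A i (τ i) + ((x (τ i) : ℝ) : T)},
      ∀ y ∈ {x : Fin n → ℝ | ∀ i : Fin n, ∀ j : Fin n, j ≠ τ i →
        A i j + ((x j : ℝ) : T) < A i (τ i) + ((x (τ i) : ℝ) : T)},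
      Real.sqrt (∑ i, ((a i + x (τ i)) - (a i + y (τ i))) ^ 2)
        = Real.sqrt (∑ i, (x i - y i) ^ 2)) := by  classical
  open Stmt10Aux List in
  · have hper : per A ≠ ⊥ := hA.1
    have hne : ∀ i, A i (τ i) ≠ ⊥ := by
      intro i hbot
      apply hper
      rw [← hτ, wt, WithBot.sum_eq_bot_iff]
      exact ⟨i, Finset.mem_univ i, hbot⟩
    set a : Fin n → ℝ := fun i => WithBot.unbotD 0 (A i (τ i)) with ha'
    have ha : ∀ i, A i (τ i) = ((a i : ℝ) : T) := by
      intro i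
      rcases WithBot.ne_bot_iff_exists.mp (hne i) with ⟨b, hb⟩
      rw [← hb, ha']
      simp only [← hb, WithBot.unbotD_coe]
    obtain ⟨σ₀, hσ₀, huniq⟩ := hA.2
    have hstrict : ∀ π : Equiv.Perm (Fin n), π ≠ τ → wt A π < wt A τ := by
      intro π hπ
      have h1 : wt A π ≤ per A := by
        rw [per]; exact Finset.le_sup (Finset.mem_univ π)
      have h2 : wt A π ≠ per A := fun h => hπ ((huniq π h).trans (huniq τ hτ).symm)
      rw [hτ]
      exact lt_of_le_of_ne h1 h2
    set E : Fin n → Fin n → Prop := fun u w => A (τ.symm w) u ≠ ⊥ with hE'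
    set G : Fin n → Fin n → ℝ := fun u w => a (τ.symm w) - WithBot.unbotD 0 (A (τ.symm w) u) with hG'
    have hcyc : ∀ (v : Fin n) (l : List (Fin n)), (v :: l).Nodup → l ≠ [] →
        List.Chain' E (v :: l ++ [v]) → 0 < pw G (v :: l ++ [v]) := by
      intro v l hnd hlne hch
      set L := v :: l with hL
      set c := L.formPerm with hc'
      have hF1 : List.Chain' (fun u w => c u = w) (L ++ [v]) := chain'_formPerm v l hnd
      have hEc : List.Chain' (fun u w => c u = w ∧ E u w) (L ++ [v]) :=
        chain'_and hF1 hch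
      have hprev : ∀ w ∈ L, ∃ u, c u = w ∧ E u w := by
        intro w hw
        apply chain'_exists_prev (L ++ [v]) hEc
        have htl : (L ++ [v]).tail = l ++ [v] := by rw [hL]; rfl
        rw [htl]
        rcases List.mem_cons.mp hw with rfl | hw'
        · exact List.mem_append_right _ (List.mem_singleton_self w)
        · exact List.mem_append_left _ hw'
      set b : Fin n → ℝ := fun w => WithBot.unbotD 0 (A (τ.symm w) (c.symm w)) with hb'
      set h' : Fin n → ℝ := fun w => a (τ.symm w) - b w with hh'
      have hGh : List.Chain' (fun u w => G u w = h' w) (L ++ [v]) := by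
        apply hF1.imp
        intro u w huw
        have hs : c.symm w = u := by rw [← huw, Equiv.symm_apply_apply]
        simp only [hG', hh', hb', hs]
      have hterm : ∀ w ∈ L, A (τ.symm w) (c.symm w) = ((b w : ℝ) : T) := by
        intro w hw
        obtain ⟨u, hcu, hEu⟩ := hprev w hw
        have hsym : c.symm w = u := by rw [← hcu, Equiv.symm_apply_apply]
        rcases WithBot.ne_bot_iff_exists.mp hEu with ⟨r, hr⟩
        have hbw : b w = r := by
          simp only [hb', hsym, ← hr, WithBot.unbotD_coe]
        rw [hbw, hsym, ← hr]
      set π : Equiv.Perm (Fin n) := c⁻¹ * τ with hπ'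
      have hπne : π ≠ τ := by
        have hLne : L ≠ [] := by simp [hL]
        have hgl : c (L.getLast hLne) = v := List.formPerm_apply_getLast v l
        have hglne : L.getLast hLne ≠ v := by
          have h1 : L.getLast hLne = l.getLast hlne := List.getLast_cons hlne
          have h2 : l.getLast hlne ∈ l := List.getLast_mem hlne
          have h3 : v ∉ l := (List.nodup_cons.mp hnd).1
          rw [h1]
          exact fun h => h3 (h ▸ h2)
        intro h
        apply hglne
        have h4 : π (τ.symm v) = τ (τ.symm v) := by rw [h]
        rw [Equiv.apply_symm_apply] at h4
        have h5 : c.symm v = v := by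
          rw [hπ'] at h4
          simpa [Equiv.Perm.mul_apply, Equiv.apply_symm_apply] using h4
        have h6 : L.getLast hLne = c.symm v := by rw [← hgl, Equiv.symm_apply_apply]
        exact h6.trans h5
      have hlt : wt A π < wt A τ := hstrict π hπne
      set f : Fin n → ℝ := fun w => if w ∈ L then b w else a (τ.symm w) with hf'
      have hterm2 : ∀ i, A i (π i) = ((f (τ i) : ℝ) : T) := by
        intro i
        have hπi : π i = c.symm (τ i) := rfl
        by_cases hw : τ i ∈ L
        · rw [hπi, hf']
          simp only [if_pos hw]
          have h6 := hterm (τ i) hw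
          rwa [Equiv.symm_apply_apply] at h6
        · have hcw : c.symm (τ i) = τ i := by
            rw [Equiv.symm_apply_eq]
            exact (List.formPerm_apply_of_notMem hw).symm
          rw [hπi, hcw, ha i, hf']
          simp only [if_neg hw, Equiv.symm_apply_apply]
      have hwtπ : wt A π = ((∑ w, f w : ℝ) : T) := by
        rw [wt, Finset.sum_congr rfl (fun i _ => hterm2 i), ← WithBot.coe_sum]
        exact congrArg (fun r : ℝ => (r : T)) (Equiv.sum_comp τ f)
      have hwtτ : wt A τ = ((∑ w, a (τ.symm w) : ℝ) : T) := by
        rw [wt, Finset.sum_congr rfl (fun i _ => ha i), ← WithBot.coe_sum]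
        exact congrArg (fun r : ℝ => (r : T)) ((Equiv.sum_comp τ.symm a).symm)
      have hreal : ∑ w, f w < ∑ w, a (τ.symm w) := by
        rw [hwtπ, hwtτ, WithBot.coe_lt_coe] at hlt
        exact hlt
      have hpw1 : pw G (L ++ [v]) = ((l ++ [v]).map h').sum := by
        have h7 := pw_eq_sum_map G h' (L ++ [v]) hGh
        rwa [show (L ++ [v]).tail = l ++ [v] from by rw [hL]; rfl] at h7
      have hpw2 : ((l ++ [v]).map h').sum = ∑ w ∈ L.toFinset, h' w := by
        rw [List.sum_toFinset h' hnd, hL]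
        simp only [List.map_append, List.map_cons, List.map_nil, List.sum_append,
          List.sum_cons, List.sum_nil]
        ring
      have hpw3 : ∑ w ∈ L.toFinset, h' w = ∑ w, (a (τ.symm w) - f w) := by
        have e1 : ∀ w ∈ L.toFinset, h' w = a (τ.symm w) - f w := by
          intro w hw
          simp only [hh', hf']
          rw [if_pos (List.mem_toFinset.mp hw)]
        rw [Finset.sum_congr rfl e1]
        apply Finset.sum_subset (Finset.subset_univ _)
        intro w _ hw
        simp only [hf']
        rw [if_neg (fun h => hw (List.mem_toFinset.mpr h))]
        ring
      have hfin : (0:ℝ) < ∑ w, (a (τ.symm w) - f w) := by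
        rw [Finset.sum_sub_distrib]
        linarith
      show 0 < pw G ((v :: l) ++ [v])
      rw [show (v :: l) ++ [v] = L ++ [v] from by rw [hL], hpw1, hpw2, hpw3]
      exact hfin
    obtain ⟨x, hx⟩ := feasStrict G E hcyc
    have hxS : ∀ i : Fin n, ∀ j : Fin n, j ≠ τ i →
        A i j + ((x j : ℝ) : T) < A i (τ i) + ((x (τ i) : ℝ) : T) := by
      intro i j hj
      rw [ha i]
      by_cases hbot : A i j = ⊥
      · rw [hbot, WithBot.bot_add, ← WithBot.coe_add]
        exact WithBot.bot_lt_coe _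
      · have hEj : E j (τ i) := by
          simp only [hE', Equiv.symm_apply_apply]
          exact hbot
        have h6 := hx j (τ i) hj hEj
        rw [hG'] at h6
        simp only [Equiv.symm_apply_apply] at h6
        rcases WithBot.ne_bot_iff_exists.mp hbot with ⟨r, hr⟩
        rw [← hr, ← WithBot.coe_add, ← WithBot.coe_add, WithBot.coe_lt_coe]
        rw [← hr, WithBot.unbotD_coe] at h6
        linarith
    refine ⟨a, ha, ⟨x, hxS⟩, ?_, ?_, ?_⟩
    · -- openness
      have heq : {z : Fin n → ℝ | ∀ i : Fin n, ∀ j : Fin n, j ≠ τ i →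
            A i j + ((z j : ℝ) : T) < A i (τ i) + ((z (τ i) : ℝ) : T)}
          = ⋂ p : Fin n × Fin n, {z : Fin n → ℝ | p.2 ≠ τ p.1 →
            A p.1 p.2 + ((z p.2 : ℝ) : T) < A p.1 (τ p.1) + ((z (τ p.1) : ℝ) : T)} := by
        ext z
        simp only [Set.mem_iInter, Set.mem_setOf_eq]
        exact ⟨fun h p => h p.1 p.2, fun h i j => h (i, j)⟩
      rw [heq]
      apply isOpen_iInter_of_finite
      rintro ⟨i, j⟩
      by_cases hji : j = τ i
      · have huniv : {z : Fin n → ℝ | (i, j).2 ≠ τ (i, j).1 →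
            A (i,j).1 (i,j).2 + ((z (i,j).2 : ℝ) : T)
              < A (i,j).1 (τ (i,j).1) + ((z (τ (i,j).1) : ℝ) : T)} = Set.univ := by
          ext z
          simp [hji]
        rw [huniv]
        exact isOpen_univ
      · by_cases hbot : A i j = ⊥
        · have huniv : {z : Fin n → ℝ | (i, j).2 ≠ τ (i, j).1 →
              A (i,j).1 (i,j).2 + ((z (i,j).2 : ℝ) : T)
                < A (i,j).1 (τ (i,j).1) + ((z (τ (i,j).1) : ℝ) : T)} = Set.univ := by
            ext z
            simp only [Set.mem_setOf_eq, Set.mem_univ, iff_true]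
            intro _
            rw [hbot, WithBot.bot_add, ha i, ← WithBot.coe_add]
            exact WithBot.bot_lt_coe _
          rw [huniv]
          exact isOpen_univ
        · rcases WithBot.ne_bot_iff_exists.mp hbot with ⟨r, hr⟩
          have hset : {z : Fin n → ℝ | (i, j).2 ≠ τ (i, j).1 →
              A (i,j).1 (i,j).2 + ((z (i,j).2 : ℝ) : T)
                < A (i,j).1 (τ (i,j).1) + ((z (τ (i,j).1) : ℝ) : T)}
              = {z : Fin n → ℝ | r + z j < a i + z (τ i)} := by
            ext z
            simp only [Set.mem_setOf_eq]
            rw [← hr, ha i, ← WithBot.coe_add, ← WithBot.coe_add, WithBot.coe_lt_coe]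
            simp [hji]
          rw [hset]
          exact isOpen_lt (continuous_const.add (continuous_apply j))
            (continuous_const.add (continuous_apply (τ i)))
    · -- formula
      intro z hz i
      show Finset.univ.sup (fun j => A i j + ((z j : ℝ) : T)) = ((a i + z (τ i) : ℝ) : T)
      apply _root_.le_antisymm
      · apply Finset.sup_le
        intro j _
        by_cases hji : j = τ i
        · rw [hji, ha i, ← WithBot.coe_add]
        · have h8 := hz i j hji
          rw [ha i, ← WithBot.coe_add] at h8
          exact le_of_lt h8
      · have h9 : A i (τ i) + ((z (τ i) : ℝ) : T)
            ≤ Finset.univ.sup (fun j => A i j + ((z j : ℝ) : T)) :=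
          Finset.le_sup (f := fun j => A i j + ((z j : ℝ) : T)) (Finset.mem_univ (τ i))
        rwa [ha i, ← WithBot.coe_add] at h9
    · -- isometry
      intro z _ y _
      congr 1
      calc ∑ i, ((a i + z (τ i)) - (a i + y (τ i))) ^ 2
          = ∑ i, (z (τ i) - y (τ i)) ^ 2 := Finset.sum_congr rfl (fun i _ => by ring)
        _ = ∑ i, (z i - y i) ^ 2 := Equiv.sum_comp τ (fun i => (z i - y i) ^ 2)
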